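/- Let H ≤ Sym(Δ), K ≤ Sym(Ψ), G ≤ Sym(Ω) be nontrivial finite permutation groups. Then the primitive wreath product H ≀_pa G acting on Δ^Ω is permutationally isomorphic to a subgroup of the primitive wreath product H ≀_pa (K ≀_pa G) acting on Δ^{(Ψ^Ω)}; moreover the embedding can be chosen so that, modulo the base groups H^Ω and H^{Ψ^Ω}, it induces the identity on the common top group G. -/

import Mathlib

/-- The coordinate-permuting action of `G` on the base group `Ω → S`. -/
def permAut (G : Type*) [Group G] (Ω : Type*) [MulAction G Ω] (S : Type*) [Group S] :
    G →* MulAut (Ω → S) where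
  toFun g := MulEquiv.arrowCongr (MulAction.toPerm g) (MulEquiv.refl S)
  map_one' := by ext f σ; simp
  map_mul' g h := by ext f σ; simp [mul_smul]

/-- The wreath product `(Ω → S) ⋊ G`. -/
abbrev Wr (S : Type*) [Group S] (G : Type*) [Group G] (Ω : Type*) [MulAction G Ω] :=
  SemidirectProduct (Ω → S) G (permAut G Ω S)

/-- The product action of `S ≀_pa G` on `Λ^Ω`. -/
def paSmul {S G Om L : Type*} [Group S] [Group G] [MulAction G Om] [MulAction S L]
    (w : Wr S G Om) (f : Om → L) : Om → L :=
  fun τ => w.left τ • f (w.right⁻¹ • τ)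

/-- The product action makes `Λ^Ω` into a `S ≀_pa G`-set. -/
instance instPaMulAction {S G Om L : Type*} [Group S] [Group G] [MulAction G Om]
    [MulAction S L] : MulAction (Wr S G Om) (Om → L) where
  smul := paSmul
  one_smul f := by
    funext τ
    show (1 : Wr S G Om).left τ • f ((1 : Wr S G Om).right⁻¹ • τ) = f τ
    simp
  mul_smul a b f := by
    funext τ
    show (a * b).left τ • f ((a * b).right⁻¹ • τ)
      = a.left τ • paSmul b f (a.right⁻¹ • τ)
    simp [paSmul, SemidirectProduct.mul_left, SemidirectProduct.mul_right, permAut,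
      mul_smul, MulAction.toPerm_symm_apply, Pi.mul_apply, mul_inv_rev,
      MulEquiv.arrowCongr]

lemma fm_extend_comp {G Om Psi : Type*} [Group G] [MulAction G Om] {α : Sort*}
    (χ : Om → (Om → Psi)) (hχ : Function.Injective χ)
    (hχg : ∀ (g : G) (ω : Om), (fun τ => χ ω (g • τ)) = χ (g⁻¹ • ω))
    (f : Om → α) (d : α) (g : G) (φ : Om → Psi) :
    Function.extend χ f (fun _ => d) (fun τ => φ (g • τ))
      = Function.extend χ (fun ω => f (g⁻¹ • ω)) (fun _ => d) φ := by
  by_cases h : ∃ ω, χ ω = φ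
  · obtain ⟨ω, rfl⟩ := h
    rw [hχg, hχ.extend_apply, hχ.extend_apply]
  · rw [Function.extend_apply' _ _ _ ?_, Function.extend_apply' _ _ _ h]
    rintro ⟨ω, hω⟩
    apply h
    refine ⟨g • ω, ?_⟩
    have h2 := hχg g⁻¹ ω
    rw [inv_inv] at h2
    rw [← h2]
    funext τ
    have := congrFun hω (g⁻¹ • τ)
    rw [this, smul_inv_smul]

lemma fm_extend_smul {Om Psi H De : Type*} [Monoid H] [MulAction H De]
    (χ : Om → (Om → Psi)) (hχ : Function.Injective χ)
    (f : Om → H) (x : Om → De) (d : De) (φ : Om → Psi) :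
    Function.extend χ (fun ω => f ω • x ω) (fun _ => d) φ
      = Function.extend χ f (fun _ => 1) φ • Function.extend χ x (fun _ => d) φ := by
  by_cases h : ∃ ω, χ ω = φ
  · obtain ⟨ω, rfl⟩ := h
    rw [hχ.extend_apply, hχ.extend_apply, hχ.extend_apply]
  · rw [Function.extend_apply' _ _ _ h, Function.extend_apply' _ _ _ h,
      Function.extend_apply' _ _ _ h, one_smul]

lemma fm_extend_mul {Om Psi H : Type*} [Monoid H]
    (χ : Om → (Om → Psi)) (hχ : Function.Injective χ)
    (f f' : Om → H) (φ : Om → Psi) :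
    Function.extend χ (fun ω => f ω * f' ω) (fun _ => (1 : H)) φ
      = Function.extend χ f (fun _ => 1) φ * Function.extend χ f' (fun _ => 1) φ := by
  by_cases h : ∃ ω, χ ω = φ
  · obtain ⟨ω, rfl⟩ := h
    rw [hχ.extend_apply, hχ.extend_apply, hχ.extend_apply]
  · rw [Function.extend_apply' _ _ _ h, Function.extend_apply' _ _ _ h,
      Function.extend_apply' _ _ _ h, one_mul]

/-- Let `H ≤ Sym(Δ)`, `K ≤ Sym(Ψ)`, `G ≤ Sym(Ω)` be nontrivial finite permutation groups.
Then the primitive wreath product `H ≀_pa G` acting on `Δ^Ω` is permutationally isomorphic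
to a subgroup of `H ≀_pa (K ≀_pa G)` acting on `Δ^{(Ψ^Ω)}`, by an embedding which, modulo
the base groups `H^Ω` and `H^{Ψ^Ω}`, induces the identity on the common top group `G`. -/
theorem forget_middle_permIso
    (H K G : Type*) [Group H] [Group K] [Group G]
    [Finite H] [Finite K] [Finite G] [Nontrivial H] [Nontrivial K] [Nontrivial G]
    (De Psi Om : Type*) [Finite De] [Finite Psi] [Finite Om]
    [MulAction H De] [FaithfulSMul H De] [MulAction K Psi] [FaithfulSMul K Psi]
    [MulAction G Om] [FaithfulSMul G Om] :
    ∃ ι : Wr H G Om →* Wr H (Wr K G Om) (Om → Psi),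
      Function.Injective ι ∧
      -- modulo the base groups, `ι` induces the identity on the top group `G`
      (∀ w : Wr H G Om, (ι w).right.right = w.right) ∧
      ∃ γ : (Om → De) → ((Om → Psi) → De),
        Function.Injective γ ∧
        ∀ (w : Wr H G Om) (F : Om → De),
          γ (paSmul w F) = paSmul (ι w) (γ F) := by
  classical
  -- `De` is nonempty since `H` is nontrivial and acts faithfully
  have hDe : Nonempty De := by
    by_contra h
    rw [not_nonempty_iff] at h
    obtain ⟨a, b, hab⟩ := exists_pair_ne H
    exact hab (eq_of_smul_eq_smul fun x : De => (h.false x).elim)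
  obtain ⟨δ₀⟩ := hDe
  -- `Psi` has two distinct elements
  obtain ⟨k, hk⟩ := exists_ne (1 : K)
  have hex : ∃ ψ : Psi, k • ψ ≠ ψ := by
    by_contra h
    push_neg at h
    exact hk (eq_of_smul_eq_smul fun x : Psi => by rw [h x, one_smul])
  obtain ⟨p, hpq⟩ := hex
  -- the characteristic-function embedding of `Om` into `Om → Psi`
  set χ : Om → (Om → Psi) := fun ω τ => if τ = ω then k • p else p with hχdef
  have hχ : Function.Injective χ := by
    intro a b hab
    by_contra hne
    have h1 := congrFun hab a
    simp only [hχdef, if_pos rfl, if_neg hne] at h1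
    exact hpq h1
  have hχg : ∀ (g : G) (ω : Om), (fun τ => χ ω (g • τ)) = χ (g⁻¹ • ω) := by
    intro g ω
    funext τ
    simp only [hχdef, smul_eq_iff_eq_inv_smul]
  -- the embedding of base groups
  set Fb : (Om → H) → ((Om → Psi) → H) := fun f => Function.extend χ f (fun _ => 1) with hFb
  have hFbχ : ∀ (f : Om → H) (ω : Om), Fb f (χ ω) = f ω := fun f ω => hχ.extend_apply f _ ω
  -- key action computation in the top group
  have hsmulχ : ∀ (g : G) (φ : Om → Psi),
      ((⟨1, g⟩ : Wr K G Om))⁻¹ • φ = fun τ => φ (g • τ) := by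
    intro g φ
    show paSmul (⟨1, g⟩ : Wr K G Om)⁻¹ φ = _
    funext τ
    show ((1 : Om → K)⁻¹) ((g⁻¹)⁻¹ • τ) • φ ((g⁻¹)⁻¹ • τ) = φ (g • τ)
    simp
  refine ⟨{ toFun := fun w => ⟨Fb w.left, ⟨1, w.right⟩⟩,
            map_one' := ?_, map_mul' := ?_ }, ?_, ?_, ?_⟩
  · refine SemidirectProduct.ext ?_ (SemidirectProduct.ext rfl rfl)
    funext φ
    by_cases h : ∃ ω, χ ω = φ
    · obtain ⟨ω, rfl⟩ := h
      simpa [hFb] using hFbχ 1 ω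
    · simp [hFb, Function.extend_apply' _ _ _ h]
  · intro a b
    refine SemidirectProduct.ext ?_ (SemidirectProduct.ext ?_ ?_)
    · show Fb (a * b).left
        = Fb a.left * permAut (Wr K G Om) (Om → Psi) H ⟨1, a.right⟩ (Fb b.left)
      funext φ
      have hperm : permAut (Wr K G Om) (Om → Psi) H ⟨1, a.right⟩ (Fb b.left) φ
          = Fb b.left ((⟨1, a.right⟩ : Wr K G Om)⁻¹ • φ) := rfl
      rw [Pi.mul_apply, hperm, hsmulχ, hFb]
      simp only
      rw [fm_extend_comp χ hχ hχg b.left 1 a.right φ]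
      have hmulleft : (a * b).left = fun ω => a.left ω * b.left (a.right⁻¹ • ω) := rfl
      rw [hmulleft, fm_extend_mul χ hχ]
    · show (1 : Om → K) = 1 * permAut G Om K a.right 1
      simp
    · rfl
  · -- injectivity of ι
    intro a b hab
    have hr : a.right = b.right := by
      have := congrArg (fun w => w.right.right) hab
      exact this
    have hl : a.left = b.left := by
      have h1 : Fb a.left = Fb b.left := congrArg SemidirectProduct.left hab
      funext ω
      have := congrFun h1 (χ ω)
      rwa [hFbχ, hFbχ] at this
    exact SemidirectProduct.ext hl hr
  · intro w; rfl
  · refine ⟨fun x => Function.extend χ x (fun _ => δ₀), ?_, ?_⟩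
    · intro a b hab
      funext ω
      have := congrFun hab (χ ω)
      simp only [hχ.extend_apply] at this
      exact this
    · intro w F
      funext φ
      show Function.extend χ (paSmul w F) (fun _ => δ₀) φ
        = Fb w.left φ • Function.extend χ F (fun _ => δ₀)
            ((⟨1, w.right⟩ : Wr K G Om)⁻¹ • φ)
      rw [hsmulχ, fm_extend_comp χ hχ hχg F δ₀ w.right φ]
      have hps : paSmul w F = fun ω => w.left ω • F (w.right⁻¹ • ω) := rfl
      rw [hps, fm_extend_smul χ hχ]
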